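/- Let n ≥ 1 and work in the multivariate polynomial ring P = MvPolynomial (Fin n ⊕ Sym2 (Fin n)) (ZMod 2), whose variables are D i := X (inl i) for i ∈ Fin n and E(i,j) := X (inr s(i,j)) for unordered pairs. Define the symmetric matrix A : Matrix (Fin n) (Fin n) P by A i j = E(i,j) for i ≠ j and A i i = D i + ∑_{j ≠ i} E(i,j). Let I be the ideal of P generated by the squares (X v)^2 of all variables v. Then det A − ∏_{i} A i i ∈ I; i.e., in the Wang algebra P/I the determinant of A equals the product of its diagonal entries. -/

import Mathlib

open MvPolynomial

/-- **Wang Algebra (Theorem 1).** In the Wang algebra, realized as the quotient of the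
polynomial ring over `ZMod 2` by the ideal generated by the squares of all variables,
the determinant of the symmetric matrix `A` (with off-diagonal entries `E(i,j)` and
diagonal entries `D i + ∑_{j ≠ i} E(i,j)`) equals the product of its diagonal entries. -/
theorem wang_algebra_det (n : ℕ) (hn : 1 ≤ n)
    (A : Matrix (Fin n) (Fin n) (MvPolynomial (Fin n ⊕ Sym2 (Fin n)) (ZMod 2)))
    (hoff : ∀ i j : Fin n, i ≠ j → A i j = X (Sum.inr s(i, j)))
    (hdiag : ∀ i : Fin n,
      A i i = X (Sum.inl i) +
        ∑ j ∈ Finset.univ.filter (fun j => j ≠ i), X (Sum.inr s(i, j))) :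
    A.det - ∏ i, A i i ∈
      Ideal.span (Set.range fun v : Fin n ⊕ Sym2 (Fin n) =>
        (X v : MvPolynomial (Fin n ⊕ Sym2 (Fin n)) (ZMod 2)) ^ 2) := by
  set I : Ideal (MvPolynomial (Fin n ⊕ Sym2 (Fin n)) (ZMod 2)) :=
    Ideal.span (Set.range fun v : Fin n ⊕ Sym2 (Fin n) =>
      (X v : MvPolynomial (Fin n ⊕ Sym2 (Fin n)) (ZMod 2)) ^ 2) with hI
  rw [← Ideal.Quotient.eq_zero_iff_mem]
  set φ := Ideal.Quotient.mk I with hφ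
  have hsq : ∀ v, φ (X v) ^ 2 = 0 := fun v => by
    rw [← map_pow, Ideal.Quotient.eq_zero_iff_mem]
    exact Ideal.subset_span ⟨v, rfl⟩
  have htwo : (2 : MvPolynomial (Fin n ⊕ Sym2 (Fin n)) (ZMod 2) ⧸ I) = 0 := by
    have h2 : (2 : MvPolynomial (Fin n ⊕ Sym2 (Fin n)) (ZMod 2)) = 0 := by
      have := map_ofNat (C : ZMod 2 →+* MvPolynomial (Fin n ⊕ Sym2 (Fin n)) (ZMod 2)) 2
      rw [← this, show ((2 : ZMod 2)) = 0 by decide, map_zero]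
    calc (2 : MvPolynomial (Fin n ⊕ Sym2 (Fin n)) (ZMod 2) ⧸ I)
        = φ (2 : MvPolynomial (Fin n ⊕ Sym2 (Fin n)) (ZMod 2)) := by rw [map_ofNat]
      _ = 0 := by rw [h2, map_zero]
  have hadd : ∀ x : MvPolynomial (Fin n ⊕ Sym2 (Fin n)) (ZMod 2) ⧸ I, x + x = 0 :=
    fun x => by rw [← two_mul, htwo, zero_mul]
  have hneg : ∀ x : MvPolynomial (Fin n ⊕ Sym2 (Fin n)) (ZMod 2) ⧸ I, -x = x :=
    fun x => by rw [neg_eq_iff_add_eq_zero]; exact hadd x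
  set B := A.map φ with hB
  have hBsymm : ∀ i j, B i j = B j i := by
    intro i j
    rcases eq_or_ne i j with h | h
    · rw [h]
    · simp only [hB, Matrix.map_apply]
      rw [hoff i j h, hoff j i h.symm, Sym2.eq_swap]
  have hBdet : φ A.det = B.det := by
    rw [φ.map_det A, hB, RingHom.mapMatrix_apply]
  rw [map_sub, hBdet, map_prod]
  have hdiagmap : ∀ i, φ (A i i) = B i i := fun i => rfl
  simp only [hdiagmap]
  rw [sub_eq_zero, Matrix.det_apply]
  have hsign : ∀ (σ : Equiv.Perm (Fin n))
      (x : MvPolynomial (Fin n ⊕ Sym2 (Fin n)) (ZMod 2) ⧸ I),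
      Equiv.Perm.sign σ • x = x := by
    intro σ x
    rcases Int.units_eq_one_or (Equiv.Perm.sign σ) with h | h <;> rw [h]
    · simp
    · simpa using hneg x
  simp only [hsign]
  set f : Equiv.Perm (Fin n) → MvPolynomial (Fin n ⊕ Sym2 (Fin n)) (ZMod 2) ⧸ I :=
    fun σ => ∏ i, B (σ i) i with hf
  have hfsymm : ∀ σ : Equiv.Perm (Fin n), f σ⁻¹ = f σ := by
    intro σ
    have h1 : f σ⁻¹ = ∏ i, B i (σ⁻¹ i) := by
      simp only [hf]
      exact Finset.prod_congr rfl fun i _ => hBsymm _ _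
    have h2 : ∏ i, B (σ i) (σ⁻¹ (σ i)) = ∏ i, B i (σ⁻¹ i) :=
      Equiv.prod_comp σ (fun i => B i (σ⁻¹ i))
    simp only [show ∀ x, σ⁻¹ (σ x) = x from Equiv.symm_apply_apply σ] at h2
    rw [h1, ← h2]
  have hinv0 : ∀ σ : Equiv.Perm (Fin n), σ⁻¹ = σ → σ ≠ 1 → f σ = 0 := by
    intro σ hσinv hσ1
    obtain ⟨i, hi⟩ : ∃ i, σ i ≠ i := by
      by_contra h
      push_neg at h
      exact hσ1 (Equiv.ext h)
    have hσσ : σ (σ i) = i := by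
      have h : σ⁻¹ (σ i) = i := Equiv.symm_apply_apply σ i
      rwa [hσinv] at h
    have hmem : σ i ∈ Finset.univ.erase i := Finset.mem_erase.2 ⟨hi, Finset.mem_univ _⟩
    show ∏ j, B (σ j) j = 0
    have h1 : ∏ j, B (σ j) j = B (σ i) i * ∏ j ∈ Finset.univ.erase i, B (σ j) j :=
      (Finset.mul_prod_erase _ _ (Finset.mem_univ i)).symm
    have h2 : ∏ j ∈ Finset.univ.erase i, B (σ j) j
        = B (σ (σ i)) (σ i) * ∏ j ∈ (Finset.univ.erase i).erase (σ i), B (σ j) j :=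
      (Finset.mul_prod_erase _ _ hmem).symm
    rw [h1, h2, ← mul_assoc]
    have hkey : B (σ i) i * B (σ (σ i)) (σ i) = 0 := by
      rw [hσσ]
      have hx : B i (σ i) = φ (X (Sum.inr s(i, σ i))) := by
        simp only [hB, Matrix.map_apply]
        rw [hoff i (σ i) (Ne.symm hi)]
      rw [hBsymm (σ i) i, hx, ← sq]
      exact hsq _
    rw [hkey, zero_mul]
  have hsum0 : ∑ σ ∈ Finset.univ.erase (1 : Equiv.Perm (Fin n)), f σ = 0 := by
    apply Finset.sum_involution (fun σ _ => σ⁻¹)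
    · intro σ hσ
      rw [hfsymm]; exact hadd _
    · intro σ hσ hfσ h
      exact hfσ (hinv0 σ h (Finset.mem_erase.1 hσ).1)
    · intro σ hσ
      exact inv_inv σ
    · intro σ hσ
      exact Finset.mem_erase.2 ⟨inv_ne_one.2 (Finset.mem_erase.1 hσ).1, Finset.mem_univ _⟩
  calc ∑ σ : Equiv.Perm (Fin n), f σ
      = f 1 + ∑ σ ∈ Finset.univ.erase (1 : Equiv.Perm (Fin n)), f σ := by
        rw [Finset.add_sum_erase _ _ (Finset.mem_univ 1)]
    _ = f 1 := by rw [hsum0, add_zero]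
    _ = ∏ i, B i i := by simp [hf]
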